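/- (Weyl differencing) Let f be a real-valued function on the integers, let L and M be positive integers, and let N be an integer. Define s'_m(L) := ∑_{n=N+1}^{N+L−m} e(f(n+m) − f(n)) if m < L, and s'_m(L) := 0 if m ≥ L. Then |∑_{n=N+1}^{N+L} e(f(n))|² ≤ ((L + M − 1)/M) · (L + 2 · ∑_{m=1}^{M} (1 − m/M) · |s'_m(L)|). -/

import Mathlib

open Complex Real

noncomputable def ee (x : ℝ) : ℂ := Complex.exp (2 * Real.pi * Complex.I * x)

lemma ee_mul_conj (x y : ℝ) : ee x * (starRingEnd ℂ) (ee y) = ee (x - y) := by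
  unfold ee
  rw [← Complex.exp_conj, ← Complex.exp_add]
  congr 1
  simp only [map_mul, map_ofNat, Complex.conj_I, Complex.conj_ofReal]
  push_cast
  ring

lemma count_pairs (h : ℕ → ℝ) (M : ℕ) :
    ∑ m1 ∈ Finset.range M, ∑ m2 ∈ Finset.range M, h (Nat.dist m1 m2)
      = M * h 0 + 2 * ∑ d ∈ Finset.Icc 1 M, ((M : ℝ) - d) * h d := by
  induction M with
  | zero => simp
  | succ M ih =>
    have hrefl : ∑ m ∈ Finset.range M, h (Nat.dist M m) = ∑ d ∈ Finset.Icc 1 M, h d := by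
      have h1 : ∑ m ∈ Finset.range M, h (Nat.dist M m)
          = ∑ m ∈ Finset.range M, (fun j => h (j + 1)) (M - 1 - m) := by
        apply Finset.sum_congr rfl
        intro m hm
        rw [Finset.mem_range] at hm
        congr 1
        rw [Nat.dist_eq_sub_of_le_right hm.le]
        omega
      have h2 := Finset.sum_range_reflect (fun j => h (j + 1)) M
      rw [h1, h2]
      rw [← Finset.Ico_add_one_right_eq_Icc, Finset.sum_Ico_eq_sum_range]
      simp [add_comm]
    have hsplit : ∀ m1 ∈ Finset.range (M+1), ∑ m2 ∈ Finset.range (M+1), h (Nat.dist m1 m2)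
        = ∑ m2 ∈ Finset.range M, h (Nat.dist m1 m2) + h (Nat.dist m1 M) :=
      fun m1 _ => Finset.sum_range_succ _ _
    rw [Finset.sum_congr rfl hsplit, Finset.sum_add_distrib, Finset.sum_range_succ,
      Finset.sum_range_succ _ M, ih]
    have hcol : ∑ m ∈ Finset.range M, h (Nat.dist m M) = ∑ d ∈ Finset.Icc 1 M, h d := by
      rw [← hrefl]; apply Finset.sum_congr rfl; intro m _; rw [Nat.dist_comm]
    rw [hrefl, hcol, Nat.dist_self]
    have htop : ∑ d ∈ Finset.Icc 1 (M+1), ((M+1 : ℝ) - d) * h d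
        = ∑ d ∈ Finset.Icc 1 M, ((M+1 : ℝ) - d) * h d := by
      rw [Finset.sum_Icc_succ_top (by omega)]
      push_cast
      ring
    push_cast [htop]
    have : ∑ d ∈ Finset.Icc 1 M, ((M:ℝ) + 1 - d) * h d
        = ∑ d ∈ Finset.Icc 1 M, (((M:ℝ) - d) * h d + h d) := by
      apply Finset.sum_congr rfl; intro d _; ring
    rw [this, Finset.sum_add_distrib]
    ring

theorem weyl_differencing (f : ℤ → ℝ) (L M : ℕ) (hL : 0 < L) (hM : 0 < M) (N : ℤ)
    (s' : ℕ → ℂ)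
    (hs' : ∀ m : ℕ, s' m =
      if m < L then
        ∑ n ∈ Finset.Icc (N + 1) (N + L - m),
          Complex.exp (2 * Real.pi * Complex.I * (f (n + m) - f n))
      else 0) :
    (‖∑ n ∈ Finset.Icc (N + 1) (N + L),
        Complex.exp (2 * Real.pi * Complex.I * (f n))‖) ^ 2 ≤
      ((L + M - 1 : ℝ) / M) *
        (L + 2 * ∑ m ∈ Finset.Icc 1 M, (1 - (m : ℝ) / M) * ‖s' m‖) := by
  classical
  set S : ℂ := ∑ n ∈ Finset.Icc (N + 1) (N + L),
      Complex.exp (2 * Real.pi * Complex.I * (f n)) with hSdef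
  have hSee : S = ∑ n ∈ Finset.Icc (N + 1) (N + (L:ℤ)), ee (f n) := rfl
  set T : Finset ℤ := Finset.Icc (N + 2 - M) (N + L) with hT
  set P : ℤ → ℕ → ℂ := fun n m =>
      if n + (m:ℤ) ∈ Finset.Icc (N+1) (N+(L:ℤ)) then ee (f (n + m)) else 0 with hP
  set g : ℤ → ℂ := fun n => ∑ m ∈ Finset.range M, P n m with hg
  set s'' : ℕ → ℂ := fun d => ∑ n ∈ Finset.Icc (N+1) (N+(L:ℤ)-d), ee (f (n + d) - f n)
    with hs''
  -- s'' = s'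
  have hss : ∀ d : ℕ, s'' d = s' d := by
    intro d
    simp only [hs'', hs' d]
    split_ifs with hd
    · apply Finset.sum_congr rfl
      intro n _
      unfold ee
      congr 1
      push_cast
      ring
    · have hLd : (L:ℤ) ≤ d := by exact_mod_cast Nat.le_of_not_lt hd
      rw [Finset.Icc_eq_empty (by omega)]
      simp
  -- Step 1 : sum of g over T = M * S
  have step1 : ∑ n ∈ T, g n = (M : ℂ) * S := by
    simp only [hg]
    rw [Finset.sum_comm]
    have hinner : ∀ m ∈ Finset.range M, ∑ n ∈ T, P n m = S := by
      intro m hm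
      rw [Finset.mem_range] at hm
      have hmZ : (m:ℤ) < M := by exact_mod_cast hm
      rw [show (∑ n ∈ T, P n m)
          = ∑ n ∈ T, (if n + (m:ℤ) ∈ Finset.Icc (N+1) (N+(L:ℤ)) then ee (f (n + m)) else 0)
          from rfl, ← Finset.sum_filter]
      have hfil : T.filter (fun n => n + (m:ℤ) ∈ Finset.Icc (N+1) (N+(L:ℤ)))
          = Finset.Icc (N+1-m) (N+L-m) := by
        ext n
        simp only [Finset.mem_filter, Finset.mem_Icc, hT]
        omega
      rw [hfil, hSee]
      apply Finset.sum_nbij' (fun n => n + (m:ℤ)) (fun n => n - (m:ℤ))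
      · intro a ha; rw [Finset.mem_Icc] at *; omega
      · intro a ha; rw [Finset.mem_Icc] at *; omega
      · intro a _; ring
      · intro a _; ring
      · intro a _; rfl
    rw [Finset.sum_congr rfl hinner, Finset.sum_const, Finset.card_range, nsmul_eq_mul]
  -- pair computation
  have pair : ∀ m1 < M, ∀ m2, m2 ≤ m1 →
      ∑ n ∈ T, P n m1 * (starRingEnd ℂ) (P n m2) = s'' (m1 - m2) := by
    intro m1 h1 m2 h2
    have hm1Z : (m1:ℤ) < M := by exact_mod_cast h1
    have hm2Z : (m2:ℤ) ≤ m1 := by exact_mod_cast h2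
    have hterm : ∀ n : ℤ, P n m1 * (starRingEnd ℂ) (P n m2)
        = if (N+1 ≤ n + (m1:ℤ) ∧ n + (m1:ℤ) ≤ N + L) ∧ (N+1 ≤ n + (m2:ℤ) ∧ n + (m2:ℤ) ≤ N+L)
          then ee (f (n + m1) - f (n + m2)) else 0 := by
      intro n
      simp only [hP, Finset.mem_Icc]
      by_cases c1 : N+1 ≤ n + (m1:ℤ) ∧ n + (m1:ℤ) ≤ N + L <;>
        by_cases c2 : N+1 ≤ n + (m2:ℤ) ∧ n + (m2:ℤ) ≤ N + L <;>
        simp only [c1, c2, ↓reduceIte, if_true, if_false, and_self, and_true, true_and,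
          and_false, false_and, map_zero, mul_zero, zero_mul, ee_mul_conj]
    rw [Finset.sum_congr rfl (fun n _ => hterm n), ← Finset.sum_filter]
    have hfil : T.filter (fun n =>
        (N+1 ≤ n + (m1:ℤ) ∧ n + (m1:ℤ) ≤ N + L) ∧ (N+1 ≤ n + (m2:ℤ) ∧ n + (m2:ℤ) ≤ N+L))
        = Finset.Icc (N+1-m2) (N+L-m1) := by
      ext n
      simp only [Finset.mem_filter, Finset.mem_Icc, hT]
      omega
    rw [hfil, hs'']
    have hcast : ((m1 - m2 : ℕ) : ℤ) = (m1:ℤ) - m2 := by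
      push_cast [h2]; ring
    apply Finset.sum_nbij' (fun n => n + (m2:ℤ)) (fun n => n - (m2:ℤ))
    · intro a ha; rw [Finset.mem_Icc] at *; omega
    · intro a ha; rw [Finset.mem_Icc] at *; omega
    · intro a _; ring
    · intro a _; ring
    · intro a _
      have heq : a + (m2:ℤ) + ((m1 - m2 : ℕ) : ℤ) = a + (m1:ℤ) := by rw [hcast]; ring
      rw [heq]
  have pairconj : ∀ m1 m2 : ℕ,
      ∑ n ∈ T, P n m1 * (starRingEnd ℂ) (P n m2)
        = (starRingEnd ℂ) (∑ n ∈ T, P n m2 * (starRingEnd ℂ) (P n m1)) := by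
    intro m1 m2
    rw [map_sum]
    apply Finset.sum_congr rfl
    intro n _
    rw [map_mul, Complex.conj_conj]
    ring
  -- A and its expansion
  set A : ℝ := ∑ n ∈ T, (‖g n‖)^2 with hA
  have hAnn : 0 ≤ A := Finset.sum_nonneg fun n _ => sq_nonneg _
  have hAC : (A : ℂ) = ∑ m1 ∈ Finset.range M, ∑ m2 ∈ Finset.range M,
      (if m2 ≤ m1 then s'' (m1 - m2) else (starRingEnd ℂ) (s'' (m2 - m1))) := by
    have e1 : (A : ℂ) = ∑ n ∈ T, g n * (starRingEnd ℂ) (g n) := by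
      rw [hA]
      push_cast
      apply Finset.sum_congr rfl
      intro n _
      rw [Complex.mul_conj, Complex.normSq_eq_norm_sq]
      push_cast
      ring
    have e2 : ∀ n : ℤ, g n * (starRingEnd ℂ) (g n)
        = ∑ m1 ∈ Finset.range M, ∑ m2 ∈ Finset.range M, P n m1 * (starRingEnd ℂ) (P n m2) := by
      intro n
      simp only [hg, map_sum, Finset.sum_mul_sum]
    rw [e1, Finset.sum_congr rfl (fun n _ => e2 n), Finset.sum_comm]
    apply Finset.sum_congr rfl
    intro m1 hm1
    rw [Finset.sum_comm]
    apply Finset.sum_congr rfl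
    intro m2 hm2
    rw [Finset.mem_range] at hm1 hm2
    split_ifs with hle
    · exact pair m1 hm1 m2 hle
    · rw [pairconj m1 m2, pair m2 hm2 m1 (Nat.le_of_not_le hle)]
  -- bound A
  have habs0 : ‖s' 0‖ = L := by
    rw [← hss 0]
    simp only [hs'']
    have : ∀ n ∈ Finset.Icc (N+1) (N+(L:ℤ)-(0:ℕ)), ee (f (n + (0:ℕ)) - f n) = 1 := by
      intro n _
      simp only [Nat.cast_zero, add_zero, sub_self]
      unfold ee
      simp
    rw [Finset.sum_congr rfl this, Finset.sum_const, Int.card_Icc]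
    simp only [Nat.cast_zero, sub_zero, nsmul_eq_mul, mul_one]
    rw [Complex.norm_natCast]
    norm_cast
    omega
  have hbound : A ≤ (M:ℝ) * (L:ℝ)
      + 2 * ∑ d ∈ Finset.Icc 1 M, ((M:ℝ) - d) * ‖s' d‖ := by
    have h1 : A ≤ ∑ m1 ∈ Finset.range M, ∑ m2 ∈ Finset.range M,
        ‖s' (Nat.dist m1 m2)‖ := by
      calc A = ‖(A : ℂ)‖ := by rw [Complex.norm_real, Real.norm_of_nonneg hAnn]
        _ ≤ ∑ m1 ∈ Finset.range M, ∑ m2 ∈ Finset.range M,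
            ‖if m2 ≤ m1 then s'' (m1 - m2) else (starRingEnd ℂ) (s'' (m2 - m1))‖ := by
            rw [hAC]
            refine le_trans (norm_sum_le _ _) ?_
            exact Finset.sum_le_sum fun m1 _ => norm_sum_le _ _
        _ = ∑ m1 ∈ Finset.range M, ∑ m2 ∈ Finset.range M,
            ‖s' (Nat.dist m1 m2)‖ := by
            apply Finset.sum_congr rfl; intro m1 _
            apply Finset.sum_congr rfl; intro m2 _
            split_ifs with hle
            · rw [hss, Nat.dist_eq_sub_of_le_right hle]
            · rw [Complex.norm_conj, hss, Nat.dist_eq_sub_of_le (Nat.le_of_not_le hle)]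
    have h2 := count_pairs (fun d => ‖s' d‖) M
    rw [h2, habs0] at h1
    linarith
  -- Cauchy-Schwarz
  have cardT : (T.card : ℝ) = (L:ℝ) + M - 1 := by
    rw [hT, Int.card_Icc]
    have : (N + (L:ℤ) + 1 - (N + 2 - M)).toNat = L + M - 1 := by omega
    rw [this]
    have h1M : 1 ≤ L + M := by omega
    push_cast [Nat.cast_sub h1M]
    ring
  have CS : ((M:ℝ))^2 * (‖S‖)^2 ≤ (T.card : ℝ) * A := by
    have h1 : (‖∑ n ∈ T, g n‖)^2 ≤ (∑ n ∈ T, ‖g n‖)^2 := by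
      apply pow_le_pow_left₀ (norm_nonneg _)
      exact norm_sum_le _ _
    have h2 : (∑ n ∈ T, ‖g n‖)^2 ≤ (T.card : ℝ) * A :=
      sq_sum_le_card_mul_sum_sq
    rw [step1] at h1
    rw [norm_mul, Complex.norm_natCast, mul_pow] at h1
    exact le_trans h1 h2
  -- finish
  have hMR : (0:ℝ) < M := by exact_mod_cast hM
  have hLM1 : (0:ℝ) ≤ (L:ℝ) + M - 1 := by
    have : (1:ℝ) ≤ L := by exact_mod_cast hL
    linarith
  have main : ((M:ℝ))^2 * (‖S‖)^2
      ≤ ((L:ℝ) + M - 1) * ((M:ℝ) * L + 2 * ∑ d ∈ Finset.Icc 1 M, ((M:ℝ) - d) * ‖s' d‖) := by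
    calc ((M:ℝ))^2 * (‖S‖)^2 ≤ (T.card : ℝ) * A := CS
      _ = ((L:ℝ) + M - 1) * A := by rw [cardT]
      _ ≤ _ := mul_le_mul_of_nonneg_left hbound hLM1
  have hRHS : ((L + M - 1 : ℝ) / M) *
        ((L:ℝ) + 2 * ∑ m ∈ Finset.Icc 1 M, (1 - (m : ℝ) / M) * ‖s' m‖)
      = (((L:ℝ) + M - 1) * ((M:ℝ) * L + 2 * ∑ d ∈ Finset.Icc 1 M, ((M:ℝ) - d) * ‖s' d‖))
        / (M:ℝ)^2 := by
    have hsum : ∑ m ∈ Finset.Icc 1 M, (1 - (m : ℝ) / M) * ‖s' m‖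
        = (1/(M:ℝ)) * ∑ d ∈ Finset.Icc 1 M, ((M:ℝ) - d) * ‖s' d‖ := by
      rw [Finset.mul_sum]
      apply Finset.sum_congr rfl
      intro d _
      field_simp
    rw [hsum]
    field_simp
  rw [hRHS, le_div_iff₀ (by positivity)]
  calc (‖S‖)^2 * (M:ℝ)^2 = ((M:ℝ))^2 * (‖S‖)^2 := by ring
    _ ≤ _ := main
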